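/- Let A be a commutative ring, L a left ideal and R a right ideal of M_n(A), with row space V(L) ⊆ A^n of L and column space V(R) ⊆ A^n of R. Then the quotient A-module M_n(A)/(L + R) is isomorphic to (A^n/V(R)) ⊗_A (A^n/V(L)). -/

import Mathlib

open TensorProduct

/-- If `L` is a left ideal and `R` a right ideal of `M_n(A)`, with row space `V(L)` and
column space `V(R)`, then `M_n(A)/(L+R) ≅ (A^n/V(R)) ⊗_A (A^n/V(L))` as `A`-modules. -/
theorem stmt_2 {n : ℕ} {A : Type*} [CommRing A]
    (L R : Submodule A (Matrix (Fin n) (Fin n) A))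
    (hL : ∀ X N : Matrix (Fin n) (Fin n) A, N ∈ L → X * N ∈ L)
    (hR : ∀ N X : Matrix (Fin n) (Fin n) A, N ∈ R → N * X ∈ R)
    (VL VR : Submodule A (Fin n → A))
    (hVL : VL = Submodule.span A {v : Fin n → A | ∃ N ∈ L, ∃ i : Fin n, N i = v})
    (hVR : VR = Submodule.span A
      {v : Fin n → A | ∃ N ∈ R, ∃ j : Fin n, (fun i => N i j) = v}) :
    Nonempty ((Matrix (Fin n) (Fin n) A ⧸ (L ⊔ R)) ≃ₗ[A]
      (((Fin n → A) ⧸ VR) ⊗[A] ((Fin n → A) ⧸ VL))) := by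
  classical
  set e : Fin n → (Fin n → A) := fun i => Pi.single i 1 with he
  -- the bilinear outer-product map
  let b : (Fin n → A) →ₗ[A] (Fin n → A) →ₗ[A] Matrix (Fin n) (Fin n) A :=
    LinearMap.mk₂ A Matrix.vecMulVec
      (fun v v' w => by ext i j; simp [Matrix.vecMulVec_apply, add_mul])
      (fun c v w => by ext i j; simp [Matrix.vecMulVec_apply, mul_assoc])
      (fun v w w' => by ext i j; simp [Matrix.vecMulVec_apply, mul_add])
      (fun c v w => by ext i j; simp [Matrix.vecMulVec_apply]; ring)
  let ψ0 : (Fin n → A) ⊗[A] (Fin n → A) →ₗ[A] Matrix (Fin n) (Fin n) A :=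
    TensorProduct.lift b
  have ψ0_tmul : ∀ v w : Fin n → A, ψ0 (v ⊗ₜ w) = Matrix.vecMulVec v w := fun v w => rfl
  -- the inverse map
  let χ : Matrix (Fin n) (Fin n) A →ₗ[A] (Fin n → A) ⊗[A] (Fin n → A) :=
    { toFun := fun X => ∑ i, ∑ j, X i j • (e i ⊗ₜ[A] e j)
      map_add' := by
        intro X Y
        simp [add_smul, Finset.sum_add_distrib]
      map_smul' := by
        intro c X
        simp [Matrix.smul_apply, smul_smul, Finset.smul_sum] }
  have hψχ : ∀ X, ψ0 (χ X) = X := by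
    intro X
    ext k l
    simp only [χ, LinearMap.coe_mk, AddHom.coe_mk, map_sum, map_smul, ψ0_tmul]
    simp [Matrix.sum_apply, Matrix.smul_apply, Matrix.vecMulVec_apply, he, Pi.single_apply,
      mul_ite, ite_mul, mul_one, mul_zero, Finset.sum_ite_eq, Finset.sum_ite_eq']
  have hχψ : ∀ z, χ (ψ0 z) = z := by
    intro z
    induction z using TensorProduct.induction_on with
    | zero => simp
    | tmul v w =>
      rw [ψ0_tmul]
      have hv : v = ∑ i, v i • e i := by
        funext k
        simp [he, Pi.single_apply, Finset.sum_ite_eq', mul_comm]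
      have hw : w = ∑ j, w j • e j := by
        funext k
        simp [he, Pi.single_apply, Finset.sum_ite_eq', mul_comm]
      conv_rhs => rw [hv, hw]
      rw [sum_tmul]
      simp only [χ, LinearMap.coe_mk, AddHom.coe_mk, tmul_sum, smul_tmul', tmul_smul, smul_smul]
      refine Finset.sum_congr rfl fun i _ => Finset.sum_congr rfl fun j _ => ?_
      congr 1
      simp [Matrix.vecMulVec_apply, mul_comm]
    | add x y hx hy => simp [map_add, hx, hy]
  let ψ : ((Fin n → A) ⊗[A] (Fin n → A)) ≃ₗ[A] Matrix (Fin n) (Fin n) A :=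
    LinearEquiv.ofLinear ψ0 χ (LinearMap.ext hψχ) (LinearMap.ext hχψ)
  have hmemR : ∀ w v : Fin n → A, v ∈ VR → b v w ∈ R := by
    intro w v hv
    rw [hVR] at hv
    induction hv using Submodule.span_induction with
    | mem x hx =>
      obtain ⟨N, hN, j, rfl⟩ := hx
      have key : b (fun i => N i j) w = N * Matrix.vecMulVec (Pi.single j 1) w := by
        ext i k
        simp [b, Matrix.mul_apply, Matrix.vecMulVec_apply, Pi.single_apply, ite_mul, mul_ite,
          Finset.sum_ite_eq', mul_assoc]
      rw [key]
      exact hR _ _ hN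
    | zero => rw [map_zero, LinearMap.zero_apply]; exact zero_mem R
    | add x y _ _ hx hy => rw [map_add, LinearMap.add_apply]; exact add_mem hx hy
    | smul c x _ hx => rw [map_smul, LinearMap.smul_apply]; exact Submodule.smul_mem R c hx
  have hmemL : ∀ v w : Fin n → A, w ∈ VL → b v w ∈ L := by
    intro v w hw
    rw [hVL] at hw
    induction hw using Submodule.span_induction with
    | mem x hx =>
      obtain ⟨N, hN, i, rfl⟩ := hx
      have key : b v (N i) = Matrix.vecMulVec v (Pi.single i 1) * N := by
        ext k j
        simp [b, Matrix.mul_apply, Matrix.vecMulVec_apply, Pi.single_apply, ite_mul, mul_ite,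
          Finset.sum_ite_eq', mul_assoc]
      rw [key]
      exact hL _ _ hN
    | zero => rw [map_zero]; exact zero_mem L
    | add x y _ _ hx hy => rw [map_add]; exact add_mem hx hy
    | smul c x _ hx => rw [map_smul]; exact Submodule.smul_mem L c hx
  have hrangeR : LinearMap.range (ψ0 ∘ₗ TensorProduct.map VR.subtype LinearMap.id) = R := by
    apply le_antisymm
    · rintro x ⟨z, rfl⟩
      simp only [LinearMap.comp_apply]
      induction z using TensorProduct.induction_on with
      | zero => simp only [map_zero]; exact zero_mem R
      | tmul v w =>
        rw [TensorProduct.map_tmul, ψ0_tmul]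
        exact hmemR _ _ v.2
      | add x y hx hy => rw [map_add, map_add]; exact add_mem hx hy
    · intro N hN
      have hcol : ∀ j, (fun i => N i j) ∈ VR := by
        intro j
        rw [hVR]
        exact Submodule.subset_span ⟨N, hN, j, rfl⟩
      refine ⟨∑ j, (⟨fun i => N i j, hcol j⟩ : VR) ⊗ₜ[A] e j, ?_⟩
      rw [LinearMap.comp_apply, map_sum, map_sum]
      simp only [TensorProduct.map_tmul, Submodule.coe_subtype, LinearMap.id_apply, ψ0_tmul]
      ext i k
      simp [Matrix.sum_apply, Matrix.vecMulVec_apply, he, Pi.single_apply, mul_ite, mul_one,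
        mul_zero, Finset.sum_ite_eq']
  have hrangeL : LinearMap.range (ψ0 ∘ₗ TensorProduct.map LinearMap.id VL.subtype) = L := by
    apply le_antisymm
    · rintro x ⟨z, rfl⟩
      simp only [LinearMap.comp_apply]
      induction z using TensorProduct.induction_on with
      | zero => simp only [map_zero]; exact zero_mem L
      | tmul v w =>
        rw [TensorProduct.map_tmul, ψ0_tmul]
        exact hmemL _ _ w.2
      | add x y hx hy => rw [map_add, map_add]; exact add_mem hx hy
    · intro N hN
      have hrow : ∀ i, N i ∈ VL := by
        intro i
        rw [hVL]
        exact Submodule.subset_span ⟨N, hN, i, rfl⟩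
      refine ⟨∑ i, e i ⊗ₜ[A] (⟨N i, hrow i⟩ : VL), ?_⟩
      rw [LinearMap.comp_apply, map_sum, map_sum]
      simp only [TensorProduct.map_tmul, Submodule.coe_subtype, LinearMap.id_apply, ψ0_tmul]
      ext k j
      simp [Matrix.sum_apply, Matrix.vecMulVec_apply, he, Pi.single_apply, ite_mul, one_mul,
        zero_mul, Finset.sum_ite_eq']
  have hmap : Submodule.map (ψ : ((Fin n → A) ⊗[A] (Fin n → A)) →ₗ[A] _)
      (LinearMap.range (TensorProduct.map VR.subtype LinearMap.id) ⊔
        LinearMap.range (TensorProduct.map LinearMap.id VL.subtype)) = L ⊔ R := by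
    rw [Submodule.map_sup]
    have h1 : Submodule.map (ψ : ((Fin n → A) ⊗[A] (Fin n → A)) →ₗ[A] _)
        (LinearMap.range (TensorProduct.map VR.subtype LinearMap.id)) = R := by
      rw [← hrangeR, LinearMap.range_comp]
      rfl
    have h2 : Submodule.map (ψ : ((Fin n → A) ⊗[A] (Fin n → A)) →ₗ[A] _)
        (LinearMap.range (TensorProduct.map LinearMap.id VL.subtype)) = L := by
      rw [← hrangeL, LinearMap.range_comp]
      rfl
    rw [h1, h2, sup_comm]
  exact ⟨(Submodule.Quotient.equiv _ _ ψ hmap).symm.trans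
    (quotientTensorQuotientEquiv VR VL).symm⟩
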